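/- (Electric energy of the free-streaming solution.) Define f(t,x,v) = (e^{−v²/2}/√(2π)) (1 + 0.01 cos(0.5 x − 0.5 v t)) for t ≥ 0, x ∈ [0,4π], v ∈ ℝ. Then f(t,x,v) = f(0, x − vt, v) solves the advection equation ∂_t f = −v ∂_x f, and the electric energy 𝓔(t) = ∫₀^{4π} E(f(t,·,·),x)² dx, computed with L = 4π, satisfies 𝓔(t) = (π/1250) e^{−t²/4} for all t ≥ 0. -/

import Mathlib

open MeasureTheory Real Set

/-- Gaussian cosine integral. -/
lemma gauss_cos (c₁ c₂ : ℝ) :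
    ∫ v : ℝ, Real.exp (-v ^ 2 / 2) * Real.cos (c₁ + c₂ * v)
      = Real.sqrt (2 * π) * (Real.exp (-c₂ ^ 2 / 2) * Real.cos c₁) := by
  have hint : Integrable (fun x : ℝ => Complex.exp (Complex.I * c₁) *
      (Complex.exp (Complex.I * c₂ * x) * Complex.exp (-(1 / 2 : ℂ) * x ^ 2))) := by
    have h := integrable_cexp_quadratic (b := (1 / 2 : ℂ)) (by norm_num)
      (Complex.I * c₂) (Complex.I * c₁)
    refine h.congr (Filter.Eventually.of_forall fun x => ?_)
    simp only [← Complex.exp_add]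
    ring_nf
  have key : (∫ x : ℝ, Complex.exp (Complex.I * c₁) *
        (Complex.exp (Complex.I * c₂ * x) * Complex.exp (-(1 / 2 : ℂ) * x ^ 2)))
      = (↑(Real.sqrt (2 * π)) : ℂ) * Complex.exp (((-c₂ ^ 2 / 2 : ℝ) : ℂ)) *
        Complex.exp (↑c₁ * Complex.I) := by
    rw [MeasureTheory.integral_const_mul,
      fourierIntegral_gaussian (b := (1 / 2 : ℂ)) (by norm_num) (c₂ : ℂ),
      show ((π : ℂ) / (1 / 2 : ℂ)) = (2 * (π : ℂ)) from by ring]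
    have hsqrt : ((Real.sqrt (2 * π) : ℝ) : ℂ) = (2 * (π : ℂ)) ^ (1 / 2 : ℂ) := by
      rw [Real.sqrt_eq_rpow, Complex.ofReal_cpow (by positivity)]
      push_cast
      norm_num
    have hexp2 : Complex.exp (-(c₂ : ℂ) ^ 2 / (4 * (1 / 2 : ℂ)))
        = Complex.exp (((-c₂ ^ 2 / 2 : ℝ) : ℂ)) := by
      congr 1
      push_cast
      ring
    rw [← hsqrt, hexp2, show Complex.I * (c₁ : ℂ) = (c₁ : ℂ) * Complex.I from by ring]
    ring
  have hre : (∫ x : ℝ, RCLike.re (Complex.exp (Complex.I * c₁) *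
        (Complex.exp (Complex.I * c₂ * x) * Complex.exp (-(1 / 2 : ℂ) * x ^ 2))))
      = (((Real.sqrt (2 * π)) : ℂ) * Complex.exp (((-c₂ ^ 2 / 2 : ℝ) : ℂ)) *
          Complex.exp (↑c₁ * Complex.I)).re := by
    rw [integral_re hint, key, RCLike.re_to_complex]
  calc ∫ v : ℝ, Real.exp (-v ^ 2 / 2) * Real.cos (c₁ + c₂ * v)
      = ∫ x : ℝ, RCLike.re (Complex.exp (Complex.I * c₁) *
          (Complex.exp (Complex.I * c₂ * x) * Complex.exp (-(1 / 2 : ℂ) * x ^ 2))) := by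
        refine integral_congr_ae (Filter.Eventually.of_forall fun x => ?_)
        simp only [← Complex.exp_add]
        have hz : Complex.I * c₁ + (Complex.I * c₂ * x + -(1 / 2 : ℂ) * x ^ 2)
            = ((-x ^ 2 / 2 : ℝ) : ℂ) + ((c₁ + c₂ * x : ℝ) : ℂ) * Complex.I := by
          push_cast; ring
        rw [hz]
        simp [RCLike.re_to_complex, Complex.exp_re, Complex.add_re, Complex.add_im,
          Complex.ofReal_re, Complex.ofReal_im, Complex.mul_re, Complex.mul_im,
          Complex.I_re, Complex.I_im, ← Complex.ofReal_pow]
    _ = (((Real.sqrt (2 * π)) : ℂ) * Complex.exp (((-c₂ ^ 2 / 2 : ℝ) : ℂ)) *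
          Complex.exp (↑c₁ * Complex.I)).re := hre
    _ = Real.sqrt (2 * π) * (Real.exp (-c₂ ^ 2 / 2) * Real.cos c₁) := by
        rw [← Complex.ofReal_exp, ← Complex.ofReal_mul, Complex.re_ofReal_mul,
          Complex.exp_ofReal_mul_I_re]
        ring

/-- The velocity integral of the density. -/
lemma density (t y : ℝ) :
    (∫ v : ℝ, Real.exp (-v ^ 2 / 2) / Real.sqrt (2 * π) *
      (1 + 0.01 * Real.cos (0.5 * y - 0.5 * v * t)))
      = 1 + 0.01 * Real.exp (-t ^ 2 / 8) * Real.cos (y / 2) := by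
  have hgfun : (fun v : ℝ => Real.exp (-v ^ 2 / 2)) = fun v => Real.exp (-(1 / 2) * v ^ 2) := by
    funext v; ring_nf
  have hI1 : Integrable (fun v : ℝ => Real.exp (-v ^ 2 / 2)) := by
    rw [hgfun]; exact integrable_exp_neg_mul_sq (by norm_num)
  have hI2 : Integrable (fun v : ℝ =>
      Real.exp (-v ^ 2 / 2) * Real.cos (0.5 * y + -(0.5 * t) * v)) := by
    have := Integrable.bdd_mul (f := fun v : ℝ => Real.cos (0.5 * y + -(0.5 * t) * v)) (c := 1)
      hI1 ((Real.continuous_cos.comp (by continuity)).aestronglyMeasurable)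
      (Filter.Eventually.of_forall fun x => by simpa using Real.abs_cos_le_one _)
    refine this.congr (Filter.Eventually.of_forall fun v => ?_)
    ring
  have hsplit : ∀ v : ℝ, Real.exp (-v ^ 2 / 2) / Real.sqrt (2 * π) *
      (1 + 0.01 * Real.cos (0.5 * y - 0.5 * v * t))
      = (Real.sqrt (2 * π))⁻¹ * Real.exp (-v ^ 2 / 2) +
        (0.01 * (Real.sqrt (2 * π))⁻¹) *
          (Real.exp (-v ^ 2 / 2) * Real.cos (0.5 * y + -(0.5 * t) * v)) := by
    intro v
    rw [show 0.5 * y - 0.5 * v * t = 0.5 * y + -(0.5 * t) * v from by ring]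
    ring
  simp only [hsplit]
  rw [integral_add (hI1.const_mul _) (hI2.const_mul _), integral_const_mul, integral_const_mul,
    gauss_cos (0.5 * y) (-(0.5 * t))]
  have hg : (∫ v : ℝ, Real.exp (-v ^ 2 / 2)) = Real.sqrt (2 * π) := by
    rw [hgfun, integral_gaussian]
    congr 1
    ring
  rw [hg]
  have h1 : Real.sqrt (2 * π) ≠ 0 := by positivity
  rw [show -(-(0.5 * t)) ^ 2 / 2 = -t ^ 2 / 8 from by ring,
    show (0.5 : ℝ) * y = y / 2 from by ring]
  field_simp

lemma aux_hasDerivAt (c A B s : ℝ) :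
    HasDerivAt (fun u : ℝ => c * (1 + 0.01 * Real.cos (B * u + A)))
      (c * (0.01 * (-Real.sin (B * s + A) * B))) s := by
  have h1 : HasDerivAt (fun u : ℝ => B * u + A) B s := by
    simpa using ((hasDerivAt_id s).const_mul B).add_const A
  have h2 : HasDerivAt (fun u : ℝ => Real.cos (B * u + A))
      (-Real.sin (B * s + A) * B) s := ((Real.hasDerivAt_cos (B * s + A)).comp s h1 :)
  exact ((h2.const_mul (0.01 : ℝ)).const_add 1).const_mul c

lemma key2 (a x : ℝ) : ∫ y in (0:ℝ)..x, a * Real.cos (y / 2) = 2 * a * Real.sin (x / 2) := by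
  have hd : ∀ u : ℝ, HasDerivAt (fun u : ℝ => 2 * a * Real.sin (u / 2))
      (a * Real.cos (u / 2)) u := by
    intro u
    have h1 : HasDerivAt (fun u : ℝ => u / 2) (1 / 2) u := (hasDerivAt_id u).div_const 2
    have h2 : HasDerivAt (fun u : ℝ => Real.sin (u / 2)) (Real.cos (u / 2) * (1 / 2)) u :=
      ((Real.hasDerivAt_sin (u / 2)).comp u h1 :)
    have h3 := h2.const_mul (2 * a)
    refine h3.congr_deriv ?_
    ring
  rw [intervalIntegral.integral_eq_sub_of_hasDerivAt (fun u _ => hd u)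
    ((Continuous.intervalIntegrable (by fun_prop) _ _))]
  simp

lemma key1 (a : ℝ) :
    ∫ y in (0:ℝ)..(4 * π), (y / (4 * π) - 1) * (a * Real.cos (y / 2)) = 0 := by
  have hd : ∀ u : ℝ, HasDerivAt
      (fun u : ℝ => a / (4 * π) * (2 * (u * Real.sin (u / 2)) + 4 * Real.cos (u / 2))
        - 2 * a * Real.sin (u / 2))
      ((u / (4 * π) - 1) * (a * Real.cos (u / 2))) u := by
    intro u
    have h1 : HasDerivAt (fun u : ℝ => u / 2) (1 / 2) u := (hasDerivAt_id u).div_const 2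
    have hsin : HasDerivAt (fun u : ℝ => Real.sin (u / 2)) (Real.cos (u / 2) * (1 / 2)) u :=
      ((Real.hasDerivAt_sin (u / 2)).comp u h1 :)
    have hcos : HasDerivAt (fun u : ℝ => Real.cos (u / 2)) (-Real.sin (u / 2) * (1 / 2)) u :=
      ((Real.hasDerivAt_cos (u / 2)).comp u h1 :)
    have hprod := (hasDerivAt_id u).mul hsin
    have htot := (((hprod.const_mul (2:ℝ)).add (hcos.const_mul (4:ℝ))).const_mul
      (a / (4 * π))).sub (hsin.const_mul (2 * a))
    refine htot.congr_deriv ?_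
    have hπ : (4:ℝ) * π ≠ 0 := by positivity
    field_simp
    simp only [id_eq]
    ring
  rw [intervalIntegral.integral_eq_sub_of_hasDerivAt (fun u _ => hd u)
    ((Continuous.intervalIntegrable (by fun_prop) _ _))]
  rw [show (4 * π) / 2 = 2 * π from by ring]
  simp [Real.sin_two_pi, Real.cos_two_pi]

lemma key3 (a : ℝ) :
    ∫ x in (0:ℝ)..(4 * π), (2 * a * Real.sin (x / 2)) ^ 2 = 8 * π * a ^ 2 := by
  have hpt : ∀ x : ℝ, (2 * a * Real.sin (x / 2)) ^ 2 = 2 * a ^ 2 * (1 - Real.cos x) := by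
    intro x
    have h2 := Real.cos_sq (x / 2)
    have h3 := Real.sin_sq (x / 2)
    rw [show 2 * (x / 2) = x from by ring] at h2
    calc (2 * a * Real.sin (x / 2)) ^ 2 = 4 * a ^ 2 * Real.sin (x / 2) ^ 2 := by ring
      _ = 2 * a ^ 2 * (1 - Real.cos x) := by rw [h3, h2]; ring
  simp only [hpt]
  have hd : ∀ u : ℝ, HasDerivAt (fun u : ℝ => 2 * a ^ 2 * (u - Real.sin u))
      (2 * a ^ 2 * (1 - Real.cos u)) u := fun u =>
    ((hasDerivAt_id u).sub (Real.hasDerivAt_sin u)).const_mul (2 * a ^ 2)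
  rw [intervalIntegral.integral_eq_sub_of_hasDerivAt (fun u _ => hd u)
    ((Continuous.intervalIntegrable (by fun_prop) _ _))]
  have hsin4 : Real.sin (4 * π) = 0 := by
    rw [show (4:ℝ) * π = 2 * π + 2 * π from by ring, Real.sin_add, Real.sin_two_pi,
      Real.cos_two_pi]
    ring
  simp [hsin4]
  ring

/-- The electric field determined by the density `f` via the kernel
`K(x,y) = y/L` for `y < x` and `K(x,y) = y/L - 1` for `y > x`. -/
noncomputable def Efield (L : ℝ) (f : ℝ → ℝ → ℝ) (x : ℝ) : ℝ :=
  ∫ y in (0:ℝ)..L, (if y < x then y / L else y / L - 1) * ((∫ v : ℝ, f y v) - 1)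

/-- (Electric energy of the free-streaming solution.) The function
`f(t,x,v) = (e^{-v²/2}/√(2π))(1 + 0.01 cos(0.5x - 0.5vt))` satisfies
`f(t,x,v) = f(0, x - vt, v)`, solves the advection equation `∂ₜ f = -v ∂ₓ f`, and its
electric energy (with `L = 4π`) is `𝓔(t) = (π/1250) e^{-t²/4}` for all `t ≥ 0`. -/
theorem free_streaming_electric_energy
    (f : ℝ → ℝ → ℝ → ℝ)
    (hf : ∀ t x v, f t x v =
      Real.exp (-v ^ 2 / 2) / Real.sqrt (2 * π) * (1 + 0.01 * Real.cos (0.5 * x - 0.5 * v * t))) :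
    (∀ t x v, f t x v = f 0 (x - v * t) v) ∧
    (∀ t x v, HasDerivAt (fun s => f s x v) (-v * deriv (fun y => f t y v) x) t) ∧
    (∀ t : ℝ, 0 ≤ t →
      (∫ x in (0:ℝ)..(4 * π), (Efield (4 * π) (f t) x) ^ 2)
        = π / 1250 * Real.exp (-t ^ 2 / 4)) := by
  refine ⟨?_, ?_, ?_⟩
  · intro t x v
    rw [hf t x v, hf 0 (x - v * t) v]
    norm_num
    left
    ring_nf
  · intro t x v
    set c := Real.exp (-v ^ 2 / 2) / Real.sqrt (2 * π) with hc
    have hfunx : (fun y => f t y v)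
        = fun y => c * (1 + 0.01 * Real.cos (0.5 * y + -(0.5 * v * t))) := by
      funext y
      rw [hf t y v, sub_eq_add_neg]
    have hdx : HasDerivAt (fun y => f t y v)
        (c * (0.01 * (-Real.sin (0.5 * x + -(0.5 * v * t)) * 0.5))) x := by
      rw [hfunx]
      exact aux_hasDerivAt c (-(0.5 * v * t)) 0.5 x
    rw [hdx.deriv]
    have hfunt : (fun s => f s x v)
        = fun s => c * (1 + 0.01 * Real.cos (-(0.5 * v) * s + 0.5 * x)) := by
      funext s
      rw [hf s x v, show 0.5 * x - 0.5 * v * s = -(0.5 * v) * s + 0.5 * x from by ring]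
    rw [hfunt]
    have h2 := aux_hasDerivAt c (0.5 * x) (-(0.5 * v)) t
    convert h2 using 1
    rw [show -(0.5 * v) * t + 0.5 * x = 0.5 * x + -(0.5 * v * t) from by ring]
    ring
  · intro t ht
    set a := 0.01 * Real.exp (-t ^ 2 / 8) with ha
    have hE : ∀ x ∈ Icc (0:ℝ) (4 * π), Efield (4 * π) (f t) x = 2 * a * Real.sin (x / 2) := by
      intro x hx
      have hrho : ∀ y : ℝ, (∫ v : ℝ, f t y v) - 1 = a * Real.cos (y / 2) := by
        intro y
        simp only [hf]
        rw [density t y, ha]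
        ring
      rw [Efield]
      simp only [hrho]
      have hg : Continuous (fun y : ℝ => a * Real.cos (y / 2)) := by fun_prop
      have h1 : IntervalIntegrable (fun y : ℝ => (y / (4 * π) - 1) * (a * Real.cos (y / 2)))
          volume 0 (4 * π) := Continuous.intervalIntegrable (by fun_prop) _ _
      have h2 : IntervalIntegrable
          (fun y : ℝ => ({y : ℝ | y ≤ x}).indicator (fun y => a * Real.cos (y / 2)) y)
          volume 0 (4 * π) := by
        rw [intervalIntegrable_iff]
        exact (intervalIntegrable_iff.mp (hg.intervalIntegrable 0 (4 * π))).indicator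
          measurableSet_Iic
      have hxne : ∀ᵐ y : ℝ, y ≠ x := by
        have hs : {y : ℝ | ¬ y ≠ x} = {x} := by ext y; simp
        rw [ae_iff, hs]
        exact measure_singleton x
      have hcongr : ∀ᵐ y : ℝ, y ∈ Set.uIoc (0:ℝ) (4 * π) →
          (if y < x then y / (4 * π) else y / (4 * π) - 1) * (a * Real.cos (y / 2))
          = (y / (4 * π) - 1) * (a * Real.cos (y / 2))
            + ({y : ℝ | y ≤ x}).indicator (fun y => a * Real.cos (y / 2)) y := by
        filter_upwards [hxne] with y hy _
        rcases lt_or_gt_of_ne hy with h | h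
        · rw [if_pos h, Set.indicator_of_mem (show y ∈ {y : ℝ | y ≤ x} from h.le)]
          ring
        · rw [if_neg (not_lt.2 h.le),
            Set.indicator_of_notMem (show y ∉ {y : ℝ | y ≤ x} from not_le.mpr h)]
          ring
      rw [intervalIntegral.integral_congr_ae hcongr,
        intervalIntegral.integral_add h1 h2,
        intervalIntegral.integral_indicator hx, key1 a, key2 a x]
      ring
    have hEsq : EqOn (fun x => (Efield (4 * π) (f t) x) ^ 2)
        (fun x => (2 * a * Real.sin (x / 2)) ^ 2) (uIcc (0:ℝ) (4 * π)) := by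
      intro x hx
      rw [uIcc_of_le (by positivity)] at hx
      simp only
      rw [hE x hx]
    rw [intervalIntegral.integral_congr hEsq, key3 a, ha]
    have hexp : Real.exp (-t ^ 2 / 8) ^ 2 = Real.exp (-t ^ 2 / 4) := by
      rw [sq, ← Real.exp_add]
      congr 1
      ring
    rw [mul_pow, hexp]
    ring
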